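/- arXiv:2505.24749 — 2 statements merged into one kernel-verified Lean document; each statement's English description precedes it below -/
import Mathlib

section
/- Let g ∈ ℝ^{n×m} be a nonzero rank-one matrix, let β ∈ (0,1), let 0 < ρ₂ < ρ₁ ≤ 1 with β < ρ₁, and let C ≥ 0. For each integer s ≥ 1 let G^(s) = ρ₁^s · g + H^(s), where ⟨g, H^(s)⟩_F = 0 and ‖H^(s)‖_F ≤ C·ρ₂^s. Define the momentum M^(t) = Σ_{s=1}^{t} β^{t−s} G^(s) and the relative rank-one approximation error κ_M(t) = ‖M^(t) − P^(t)(1) M^(t)‖_F² / ‖M^(t)‖_F², where P^(t)(1) = u₁^(t) (u₁^(t))ᵀ is the orthogonal projection onto a top left-singular vector of M^(t). Then there exist constants K ≥ 0 and c > 1 (any c with 1 < c < (ρ₁ / max{β, ρ₂})² works) such that κ_M(t) ≤ K·c^{−t} for all t ≥ 1; in particular M^(t) becomes rank-one at a geometric rate. -/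
open Matrix Finset

/-- Frobenius inner product `⟨A,B⟩_F = tr(AᵀB)`. -/
noncomputable def frobInner {n m : ℕ} (A B : Matrix (Fin n) (Fin m) ℝ) : ℝ :=
  (Aᵀ * B).trace

/-- Frobenius norm. -/
noncomputable def frobNorm {n m : ℕ} (A : Matrix (Fin n) (Fin m) ℝ) : ℝ :=
  Real.sqrt (frobInner A A)

/-- Spectral norm (largest singular value): the supremum of `‖Ax‖₂` over unit vectors `x`. -/
noncomputable def specNorm {n m : ℕ} (A : Matrix (Fin n) (Fin m) ℝ) : ℝ :=
  sSup {r : ℝ | ∃ x : Fin m → ℝ, ∑ j, x j ^ 2 = 1 ∧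
    r = Real.sqrt (∑ i, (A.mulVec x) i ^ 2)}

lemma frobInner_eq_sum {n m : ℕ} (A B : Matrix (Fin n) (Fin m) ℝ) :
    frobInner A B = ∑ i, ∑ j, A i j * B i j := by
  rw [frobInner, Matrix.trace]
  simp only [Matrix.diag, Matrix.mul_apply, Matrix.transpose_apply]
  exact Finset.sum_comm

lemma frobInner_self_nonneg {n m : ℕ} (A : Matrix (Fin n) (Fin m) ℝ) :
    0 ≤ frobInner A A := by
  rw [frobInner_eq_sum]
  apply Finset.sum_nonneg; intro i _
  apply Finset.sum_nonneg; intro j _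
  exact mul_self_nonneg _

lemma frobNorm_nonneg {n m : ℕ} (A : Matrix (Fin n) (Fin m) ℝ) : 0 ≤ frobNorm A :=
  Real.sqrt_nonneg _

lemma frobNorm_sq {n m : ℕ} (A : Matrix (Fin n) (Fin m) ℝ) :
    frobNorm A ^ 2 = frobInner A A :=
  Real.sq_sqrt (frobInner_self_nonneg A)

lemma frobInner_comm {n m : ℕ} (A B : Matrix (Fin n) (Fin m) ℝ) :
    frobInner A B = frobInner B A := by
  simp only [frobInner_eq_sum, mul_comm]

lemma frobInner_add_right {n m : ℕ} (A B C : Matrix (Fin n) (Fin m) ℝ) :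
    frobInner A (B + C) = frobInner A B + frobInner A C := by
  simp only [frobInner_eq_sum, Matrix.add_apply, mul_add, Finset.sum_add_distrib]

lemma frobInner_smul_right {n m : ℕ} (c : ℝ) (A B : Matrix (Fin n) (Fin m) ℝ) :
    frobInner A (c • B) = c * frobInner A B := by
  simp only [frobInner_eq_sum, Matrix.smul_apply, smul_eq_mul, Finset.mul_sum]
  apply Finset.sum_congr rfl; intro i _
  apply Finset.sum_congr rfl; intro j _
  ring

lemma frobInner_sum_right {n m : ℕ} (A : Matrix (Fin n) (Fin m) ℝ) (F : Finset ℕ)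
    (f : ℕ → Matrix (Fin n) (Fin m) ℝ) :
    frobInner A (∑ s ∈ F, f s) = ∑ s ∈ F, frobInner A (f s) := by
  classical
  induction F using Finset.induction_on with
  | empty => simp [frobInner_eq_sum]
  | insert _ _ h ih =>
    rw [Finset.sum_insert h, Finset.sum_insert h, frobInner_add_right, ih]

lemma frobNorm_smul {n m : ℕ} (c : ℝ) (A : Matrix (Fin n) (Fin m) ℝ) :
    frobNorm (c • A) = |c| * frobNorm A := by
  rw [frobNorm, frobNorm]
  have : frobInner (c • A) (c • A) = c ^ 2 * frobInner A A := by
    rw [frobInner_smul_right, frobInner_comm, frobInner_smul_right]; ring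
  rw [this, Real.sqrt_mul (sq_nonneg c), Real.sqrt_sq_eq_abs]

lemma frobNorm_add_le {n m : ℕ} (A B : Matrix (Fin n) (Fin m) ℝ) :
    frobNorm (A + B) ≤ frobNorm A + frobNorm B := by
  have key : ∀ X : Matrix (Fin n) (Fin m) ℝ,
      frobNorm X = ‖((WithLp.equiv 2 ((Fin n × Fin m) → ℝ)).symm
        (fun p => X p.1 p.2) : EuclideanSpace ℝ (Fin n × Fin m))‖ := by
    intro X
    rw [EuclideanSpace.norm_eq, frobNorm, frobInner_eq_sum]
    congr 1
    rw [Fintype.sum_prod_type]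
    apply Finset.sum_congr rfl; intro i _
    apply Finset.sum_congr rfl; intro j _
    simp [Real.norm_eq_abs, sq_abs, sq]
  rw [key, key, key]
  have : ((WithLp.equiv 2 ((Fin n × Fin m) → ℝ)).symm
        (fun p => (A + B) p.1 p.2) : EuclideanSpace ℝ (Fin n × Fin m))
      = (WithLp.equiv 2 ((Fin n × Fin m) → ℝ)).symm (fun p => A p.1 p.2)
        + (WithLp.equiv 2 ((Fin n × Fin m) → ℝ)).symm (fun p => B p.1 p.2) := rfl
  rw [this]
  exact norm_add_le _ _

lemma frobNorm_sum_le {n m : ℕ} (F : Finset ℕ) (f : ℕ → Matrix (Fin n) (Fin m) ℝ) :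
    frobNorm (∑ s ∈ F, f s) ≤ ∑ s ∈ F, frobNorm (f s) := by
  classical
  induction F using Finset.induction_on with
  | empty => simp [frobNorm, frobInner_eq_sum]
  | insert _ _ h ih =>
    rw [Finset.sum_insert h, Finset.sum_insert h]
    exact le_trans (frobNorm_add_le _ _) (by linarith)

lemma le_specNorm_sq {n m : ℕ} (A : Matrix (Fin n) (Fin m) ℝ) (x : Fin m → ℝ)
    (hx : ∑ j, x j ^ 2 = 1) :
    ∑ i, (A.mulVec x) i ^ 2 ≤ specNorm A ^ 2 := by
  set S := {r : ℝ | ∃ y : Fin m → ℝ, ∑ j, y j ^ 2 = 1 ∧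
    r = Real.sqrt (∑ i, (A.mulVec y) i ^ 2)} with hS
  have hmem : Real.sqrt (∑ i, (A.mulVec x) i ^ 2) ∈ S := ⟨x, hx, rfl⟩
  have hbdd : BddAbove S := by
    refine ⟨Real.sqrt (∑ i, ∑ j, A i j ^ 2), ?_⟩
    rintro r ⟨y, hy, rfl⟩
    apply Real.sqrt_le_sqrt
    apply Finset.sum_le_sum
    intro i _
    calc (A.mulVec y i) ^ 2 = (∑ j, A i j * y j) ^ 2 := by
          simp [Matrix.mulVec, dotProduct]
      _ ≤ (∑ j, A i j ^ 2) * (∑ j, y j ^ 2) := Finset.sum_mul_sq_le_sq_mul_sq _ _ _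
      _ = ∑ j, A i j ^ 2 := by rw [hy, mul_one]
  have hle : Real.sqrt (∑ i, (A.mulVec x) i ^ 2) ≤ specNorm A := le_csSup hbdd hmem
  have h0 : (0:ℝ) ≤ Real.sqrt (∑ i, (A.mulVec x) i ^ 2) := Real.sqrt_nonneg _
  calc ∑ i, (A.mulVec x) i ^ 2
      = (Real.sqrt (∑ i, (A.mulVec x) i ^ 2)) ^ 2 :=
        (Real.sq_sqrt (Finset.sum_nonneg fun i _ => sq_nonneg _)).symm
    _ ≤ specNorm A ^ 2 := by
        apply pow_le_pow_left₀ h0 hle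

lemma rank_one_decomp {n m : ℕ} (g : Matrix (Fin n) (Fin m) ℝ) (hg : g.rank = 1) :
    ∃ (p : Fin n → ℝ) (q : Fin m → ℝ), g = Matrix.vecMulVec p q ∧
      (0 < ∑ i, p i ^ 2) ∧ (0 < ∑ j, q j ^ 2) := by
  have hfr : Module.finrank ℝ (LinearMap.range g.mulVecLin) = 1 := hg
  obtain ⟨v, hv0, hv⟩ := (finrank_eq_one_iff' ).mp hfr
  set p : Fin n → ℝ := (v : Fin n → ℝ) with hp
  have hcol : ∀ j : Fin m, (fun i => g i j) ∈ LinearMap.range g.mulVecLin := by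
    intro j
    exact ⟨Pi.single j 1, by ext i; simp [Matrix.mulVecLin_apply, Matrix.mulVec_single]⟩
  choose q hq using fun j => hv ⟨fun i => g i j, hcol j⟩
  have hgpq : g = Matrix.vecMulVec p q := by
    ext i j
    have h2 : ((q j • v : LinearMap.range g.mulVecLin) : Fin n → ℝ) i = g i j := by
      rw [hq j]
    simp only [Submodule.coe_smul, Pi.smul_apply, smul_eq_mul] at h2
    rw [Matrix.vecMulVec_apply, ← h2, hp, mul_comm]
  have hpne : p ≠ 0 := fun h => hv0 (Subtype.ext h)
  obtain ⟨i0, hi0⟩ := Function.ne_iff.mp hpne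
  have hgne : g ≠ 0 := by
    intro h; rw [h] at hg; simp [Matrix.rank_zero] at hg
  obtain ⟨i1, j1, h1⟩ : ∃ i j, g i j ≠ 0 := by
    by_contra h
    push_neg at h
    exact hgne (by ext i j; exact h i j)
  have hq1 : q j1 ≠ 0 := by
    intro h
    apply h1
    rw [hgpq, Matrix.vecMulVec_apply, h, mul_zero]
  refine ⟨p, q, hgpq, ?_, ?_⟩
  · exact Finset.sum_pos' (fun i _ => sq_nonneg _) ⟨i0, Finset.mem_univ _, by simpa using sq_pos_of_ne_zero (by simpa using hi0)⟩
  · exact Finset.sum_pos' (fun j _ => sq_nonneg _) ⟨j1, Finset.mem_univ _, sq_pos_of_ne_zero hq1⟩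

lemma frobInner_add_left {n m : ℕ} (A B C : Matrix (Fin n) (Fin m) ℝ) :
    frobInner (A + B) C = frobInner A C + frobInner B C := by
  rw [frobInner_comm, frobInner_add_right, frobInner_comm C A, frobInner_comm C B]

lemma frobInner_smul_left {n m : ℕ} (c : ℝ) (A B : Matrix (Fin n) (Fin m) ℝ) :
    frobInner (c • A) B = c * frobInner A B := by
  rw [frobInner_comm, frobInner_smul_right, frobInner_comm B A]

lemma frobInner_expand {n m : ℕ} (x : ℝ) (A B : Matrix (Fin n) (Fin m) ℝ) :
    frobInner (x • A + B) (x • A + B) =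
      x ^ 2 * frobInner A A + 2 * x * frobInner A B + frobInner B B := by
  rw [frobInner_add_left, frobInner_add_right, frobInner_add_right,
    frobInner_smul_left, frobInner_smul_left, frobInner_smul_right,
    frobInner_smul_right, frobInner_comm B A]
  ring

/-- **Moment becomes low-rank during training.**
If `G^(s) = ρ₁^s g + H^(s)` with `g` rank one, `H^(s) ⟂ g` and `‖H^(s)‖_F ≤ C ρ₂^s`
(`0 < ρ₂ < ρ₁ ≤ 1`, `β < ρ₁`), then the relative rank-one approximation error of the
momentum `M^(t) = Σ_{s=1}^t β^{t-s} G^(s)` decays geometrically: for any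
`1 < c < (ρ₁ / max{β,ρ₂})²` there is `K ≥ 0` with `κ_M(t) ≤ K c^{-t}` for all `t ≥ 1`. -/
theorem moment_becomes_low_rank
    {n m : ℕ} (g : Matrix (Fin n) (Fin m) ℝ) (hg : g.rank = 1)
    (β ρ₁ ρ₂ C : ℝ) (hβ0 : 0 < β) (hβ1 : β < 1)
    (hρ₂0 : 0 < ρ₂) (hρ₂₁ : ρ₂ < ρ₁) (hρ₁ : ρ₁ ≤ 1) (hβρ : β < ρ₁) (hC : 0 ≤ C)
    (H G M : ℕ → Matrix (Fin n) (Fin m) ℝ)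
    (hHorth : ∀ s, 1 ≤ s → frobInner g (H s) = 0)
    (hHnorm : ∀ s, 1 ≤ s → frobNorm (H s) ≤ C * ρ₂ ^ s)
    (hG : ∀ s, 1 ≤ s → G s = ρ₁ ^ s • g + H s)
    (hM : ∀ t, M t = ∑ s ∈ Finset.Icc 1 t, β ^ (t - s) • G s)
    (u : ℕ → Fin n → ℝ)
    (hu_unit : ∀ t, 1 ≤ t → ∑ i, u t i ^ 2 = 1)
    (hu_top : ∀ t, 1 ≤ t →
      (M t * (M t)ᵀ).mulVec (u t) = (specNorm (M t)) ^ 2 • u t)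
    (κ : ℕ → ℝ)
    (hκ : ∀ t, κ t =
      frobNorm (M t - vecMulVec (u t) (u t) * M t) ^ 2 / frobNorm (M t) ^ 2) :
    ∀ c : ℝ, 1 < c → c < (ρ₁ / max β ρ₂) ^ 2 →
      ∃ K : ℝ, 0 ≤ K ∧ ∀ t, 1 ≤ t → κ t ≤ K / c ^ t := by
  intro c hc1 hc2
  obtain ⟨p, q, hgpq, hPs, hQs⟩ := rank_one_decomp g hg
  set Ps := ∑ i, p i ^ 2 with hPsdef
  set Qs := ∑ j, q j ^ 2 with hQsdef
  have hρ₁0 : 0 < ρ₁ := lt_trans hρ₂0 hρ₂₁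
  set r := max β ρ₂ with hrdef
  have hr0 : 0 < r := lt_of_lt_of_le hβ0 (le_max_left _ _)
  have hrρ : r < ρ₁ := max_lt hβρ hρ₂₁
  set σ2 := frobInner g g with hσ2def
  have hσ2eq : σ2 = Ps * Qs := by
    rw [hσ2def, frobInner_eq_sum, hgpq, hPsdef, hQsdef, Finset.sum_mul_sum]
    apply Finset.sum_congr rfl; intro i _
    apply Finset.sum_congr rfl; intro j _
    simp [Matrix.vecMulVec_apply]; ring
  have hσ2pos : 0 < σ2 := by rw [hσ2eq]; exact mul_pos hPs hQs
  set a : ℕ → ℝ := fun t => ∑ s ∈ Finset.Icc 1 t, β ^ (t - s) * ρ₁ ^ s with hadef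
  set E : ℕ → Matrix (Fin n) (Fin m) ℝ :=
    fun t => ∑ s ∈ Finset.Icc 1 t, β ^ (t - s) • H s with hEdef
  have hMt : ∀ t, M t = a t • g + E t := by
    intro t
    rw [hM t, hadef, hEdef]
    simp only
    rw [Finset.sum_smul, ← Finset.sum_add_distrib]
    apply Finset.sum_congr rfl
    intro s hs
    rw [hG s (Finset.mem_Icc.mp hs).1, smul_add, smul_smul]
  have hgE : ∀ t, frobInner g (E t) = 0 := by
    intro t
    rw [hEdef]
    simp only
    rw [frobInner_sum_right]
    apply Finset.sum_eq_zero
    intro s hs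
    rw [frobInner_smul_right, hHorth s (Finset.mem_Icc.mp hs).1, mul_zero]
  have hMM : ∀ t, frobInner (M t) (M t) = a t ^ 2 * σ2 + frobInner (E t) (E t) := by
    intro t
    rw [hMt t, frobInner_expand, hgE t]
    ring
  -- numerator identity
  have hnum : ∀ t, 1 ≤ t →
      frobNorm (M t - vecMulVec (u t) (u t) * M t) ^ 2 =
        frobInner (M t) (M t) - specNorm (M t) ^ 2 := by
    intro t ht
    set w : Fin m → ℝ := fun j => ∑ i, u t i * M t i j with hwdef
    have hPMapp : ∀ i j, (vecMulVec (u t) (u t) * M t) i j = u t i * w j := by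
      intro i j
      rw [Matrix.mul_apply, hwdef]
      simp only [Matrix.vecMulVec_apply]
      rw [Finset.mul_sum]
      apply Finset.sum_congr rfl; intro k _; ring
    have s1 : frobInner (M t) (vecMulVec (u t) (u t) * M t) = ∑ j, w j ^ 2 := by
      rw [frobInner_eq_sum, Finset.sum_comm]
      apply Finset.sum_congr rfl; intro j _
      rw [hwdef]
      simp only [hPMapp]
      rw [sq, Finset.sum_mul_sum]
      apply Finset.sum_congr rfl; intro i _
      rw [Finset.mul_sum, Finset.mul_sum]
      apply Finset.sum_congr rfl; intro k _
      ring
    have s2 : frobInner (vecMulVec (u t) (u t) * M t) (vecMulVec (u t) (u t) * M t)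
        = ∑ j, w j ^ 2 := by
      rw [frobInner_eq_sum]
      simp only [hPMapp]
      calc ∑ i, ∑ j, (u t i * w j) * (u t i * w j)
          = (∑ i, u t i ^ 2) * (∑ j, w j ^ 2) := by
            rw [Finset.sum_mul_sum]
            apply Finset.sum_congr rfl; intro i _
            apply Finset.sum_congr rfl; intro j _
            ring
        _ = ∑ j, w j ^ 2 := by rw [hu_unit t ht, one_mul]
    have s3 : ∑ j, w j ^ 2 = specNorm (M t) ^ 2 := by
      have h := congrArg (fun v => dotProduct (u t) v) (hu_top t ht)
      simp only [dotProduct, Matrix.mulVec, Matrix.mul_apply, Pi.smul_apply,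
        smul_eq_mul] at h
      have lhs : ∑ i, u t i * ∑ k, (∑ j, M t i j * (M t)ᵀ j k) * u t k
          = ∑ j, w j ^ 2 := by
        have step : ∀ i, u t i * ∑ k, (∑ j, M t i j * (M t)ᵀ j k) * u t k
            = ∑ j, ∑ k, (u t i * M t i j) * (u t k * M t k j) := by
          intro i
          rw [Finset.mul_sum, Finset.sum_comm]
          apply Finset.sum_congr rfl; intro k _
          rw [Finset.sum_mul, Finset.mul_sum]
          apply Finset.sum_congr rfl; intro j _
          simp only [Matrix.transpose_apply]; ring
        rw [Finset.sum_congr rfl (fun i _ => step i), Finset.sum_comm]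
        apply Finset.sum_congr rfl; intro j _
        rw [hwdef, sq, Finset.sum_mul_sum]
      have rhs : ∑ i, u t i * (specNorm (M t) ^ 2 * u t i) = specNorm (M t) ^ 2 := by
        calc ∑ i, u t i * (specNorm (M t) ^ 2 * u t i)
            = specNorm (M t) ^ 2 * ∑ i, u t i ^ 2 := by
              rw [Finset.mul_sum]
              apply Finset.sum_congr rfl; intro i _; ring
          _ = specNorm (M t) ^ 2 := by rw [hu_unit t ht, mul_one]
      rw [← lhs, h, rhs]
    have hsub : M t - vecMulVec (u t) (u t) * M t
        = (-1 : ℝ) • (vecMulVec (u t) (u t) * M t) + M t := by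
      rw [neg_one_smul]; abel
    rw [hsub, frobNorm_sq, frobInner_expand, s2, s3, frobInner_comm, s1, s3]
    ring
  -- spectral norm lower bound
  have hspec : ∀ t, 1 ≤ t → a t ^ 2 * σ2 ≤ specNorm (M t) ^ 2 := by
    intro t ht
    set sq := Real.sqrt Qs with hsqdef
    have hsqpos : 0 < sq := Real.sqrt_pos.mpr hQs
    have hsq2 : sq ^ 2 = Qs := Real.sq_sqrt hQs.le
    set x : Fin m → ℝ := fun j => q j / sq with hxdef
    have hx : ∑ j, x j ^ 2 = 1 := by
      rw [hxdef]
      simp only [div_pow, ← Finset.sum_div]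
      rw [hsq2, ← hQsdef, div_self hQs.ne']
    have hMx : ∀ i, (M t).mulVec x i = a t * sq * p i + (E t).mulVec x i := by
      intro i
      rw [hMt t]
      simp only [Matrix.mulVec, dotProduct, Matrix.add_apply, Matrix.smul_apply,
        smul_eq_mul, add_mul, Finset.sum_add_distrib]
      congr 1
      rw [hgpq]
      simp only [Matrix.vecMulVec_apply, hxdef]
      calc ∑ j, a t * (p i * q j) * (q j / sq)
          = (a t * p i / sq) * ∑ j, q j ^ 2 := by
            rw [Finset.mul_sum]
            apply Finset.sum_congr rfl; intro j _
            field_simp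
        _ = a t * sq * p i := by
            rw [← hQsdef, ← hsq2]; field_simp
    have hcross : ∑ i, p i * (E t).mulVec x i = 0 := by
      have expand : ∑ i, p i * (E t).mulVec x i = (1 / sq) * frobInner g (E t) := by
        rw [frobInner_eq_sum, hgpq, Finset.mul_sum]
        apply Finset.sum_congr rfl; intro i _
        simp only [Matrix.mulVec, dotProduct, Matrix.vecMulVec_apply, hxdef,
          Finset.mul_sum]
        apply Finset.sum_congr rfl; intro j _
        field_simp
      rw [expand, hgE t, mul_zero]
    have key := le_specNorm_sq (M t) x hx
    refine le_trans ?_ key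
    calc a t ^ 2 * σ2 ≤ a t ^ 2 * σ2 + ∑ i, ((E t).mulVec x i) ^ 2 := by
          have : (0:ℝ) ≤ ∑ i, ((E t).mulVec x i) ^ 2 :=
            Finset.sum_nonneg fun i _ => sq_nonneg _
          linarith
      _ = ∑ i, ((M t).mulVec x i) ^ 2 := by
          rw [Finset.sum_congr rfl (fun i (_ : i ∈ Finset.univ) =>
            congrArg (· ^ 2) (hMx i))]
          have expand : ∀ i, (a t * sq * p i + (E t).mulVec x i) ^ 2
              = (a t ^ 2 * sq ^ 2) * p i ^ 2 + 2 * (a t * sq) * (p i * (E t).mulVec x i)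
                + ((E t).mulVec x i) ^ 2 := by intro i; ring
          rw [Finset.sum_congr rfl (fun i _ => expand i)]
          rw [Finset.sum_add_distrib, Finset.sum_add_distrib, ← Finset.mul_sum,
            ← Finset.mul_sum, hcross, mul_zero, add_zero, hsq2, ← hPsdef, hσ2eq]
          ring
  -- bound on ‖E t‖
  have hEbound : ∀ t, 1 ≤ t → frobNorm (E t) ≤ C * t * r ^ t := by
    intro t ht
    rw [hEdef]
    simp only
    refine le_trans (frobNorm_sum_le _ _) ?_
    have step : ∀ s ∈ Finset.Icc 1 t, frobNorm (β ^ (t - s) • H s) ≤ C * r ^ t := by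
      intro s hs
      obtain ⟨hs1, hs2⟩ := Finset.mem_Icc.mp hs
      rw [frobNorm_smul, abs_of_nonneg (pow_nonneg hβ0.le _)]
      calc β ^ (t - s) * frobNorm (H s) ≤ β ^ (t - s) * (C * ρ₂ ^ s) := by
            exact mul_le_mul_of_nonneg_left (hHnorm s hs1) (pow_nonneg hβ0.le _)
        _ ≤ r ^ (t - s) * (C * r ^ s) := by
            apply mul_le_mul
            · exact pow_le_pow_left₀ hβ0.le (le_max_left _ _) _
            · exact mul_le_mul_of_nonneg_left
                (pow_le_pow_left₀ hρ₂0.le (le_max_right _ _) _) hC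
            · positivity
            · positivity
        _ = C * (r ^ (t - s) * r ^ s) := by ring
        _ = C * r ^ t := by rw [← pow_add, Nat.sub_add_cancel hs2]
    refine le_trans (Finset.sum_le_sum step) ?_
    rw [Finset.sum_const, Nat.card_Icc]
    simp only [nsmul_eq_mul]
    have : (t + 1 - 1 : ℕ) = t := by omega
    rw [this]
    ring_nf
    exact le_refl _
  -- bound on a t
  have habound : ∀ t, 1 ≤ t → ρ₁ ^ t ≤ a t := by
    intro t ht
    rw [hadef]
    have hmem : t ∈ Finset.Icc 1 t := Finset.mem_Icc.mpr ⟨ht, le_refl t⟩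
    have := Finset.single_le_sum (f := fun s => β ^ (t - s) * ρ₁ ^ s)
      (fun s _ => by positivity) hmem
    simpa using this
  -- the constant
  set x := c * (r / ρ₁) ^ 2 with hxcdef
  have hx0 : 0 ≤ x := by positivity
  have hx1 : x < 1 := by
    have h1 : (0:ℝ) < (r / ρ₁) ^ 2 := by positivity
    have h2 : (ρ₁ / r) ^ 2 = ((r / ρ₁) ^ 2)⁻¹ := by
      rw [div_pow, div_pow, inv_div]
    rw [hxcdef]
    calc c * (r / ρ₁) ^ 2 < (ρ₁ / r) ^ 2 * (r / ρ₁) ^ 2 :=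
          mul_lt_mul_of_pos_right hc2 h1
      _ = 1 := by rw [h2, inv_mul_cancel₀ h1.ne']
  have htend : Filter.Tendsto (fun t : ℕ => (C ^ 2 / σ2) * ((t : ℝ) ^ 2 * x ^ t))
      Filter.atTop (nhds ((C ^ 2 / σ2) * 0)) :=
    (tendsto_pow_const_mul_const_pow_of_lt_one 2 hx0 hx1).const_mul _
  obtain ⟨K0, hK0⟩ := htend.bddAbove_range
  refine ⟨max K0 0, le_max_right _ _, ?_⟩
  intro t ht
  have hct : (0:ℝ) < c ^ t := pow_pos (lt_trans zero_lt_one hc1) t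
  have hρt : (0:ℝ) < ρ₁ ^ t := pow_pos hρ₁0 t
  have hat : (0:ℝ) < a t := lt_of_lt_of_le hρt (habound t ht)
  -- κ t ≤ ‖E t‖² / (a t² σ2)
  have step1 : κ t ≤ frobNorm (E t) ^ 2 / (a t ^ 2 * σ2) := by
    rw [hκ t, frobNorm_sq (M t), hnum t ht]
    apply div_le_div₀ (sq_nonneg _)
    · have h1 := hspec t ht
      have h2 := hMM t
      have h3 : frobNorm (E t) ^ 2 = frobInner (E t) (E t) := frobNorm_sq _
      linarith
    · positivity
    · rw [hMM t]
      have h3 : frobNorm (E t) ^ 2 = frobInner (E t) (E t) := frobNorm_sq _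
      nlinarith [sq_nonneg (frobNorm (E t))]
  have step2 : frobNorm (E t) ^ 2 / (a t ^ 2 * σ2)
      ≤ (C * t * r ^ t) ^ 2 / ((ρ₁ ^ t) ^ 2 * σ2) := by
    apply div_le_div₀ (sq_nonneg _)
    · exact pow_le_pow_left₀ (frobNorm_nonneg _) (hEbound t ht) 2
    · positivity
    · have := habound t ht
      have h2 : (ρ₁ ^ t) ^ 2 ≤ a t ^ 2 := pow_le_pow_left₀ hρt.le this 2
      exact mul_le_mul_of_nonneg_right h2 hσ2pos.le
  have step3 : (C * t * r ^ t) ^ 2 / ((ρ₁ ^ t) ^ 2 * σ2)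
      = ((C ^ 2 / σ2) * ((t : ℝ) ^ 2 * x ^ t)) / c ^ t := by
    rw [hxcdef, mul_pow, mul_pow, div_pow, mul_pow]
    field_simp
    ring
    rw [mul_assoc (C ^ 2 * r ^ (t * 2)), ← mul_pow, mul_inv_cancel₀ hρ₁0.ne', one_pow, mul_one]
  have step4 : ((C ^ 2 / σ2) * ((t : ℝ) ^ 2 * x ^ t)) / c ^ t ≤ max K0 0 / c ^ t := by
    apply div_le_div_of_nonneg_right (le_trans (hK0 ⟨t, rfl⟩) (le_max_left _ _)) hct.le
  calc κ t ≤ _ := step1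
    _ ≤ _ := step2
    _ = _ := step3
    _ ≤ _ := step4
end

section
/- Let A ∈ ℝ^{m×n} with m ≤ n, let B = AAᵀ have eigenvalues σ₁ ≥ … ≥ σ_m with σ₁ > 0 and σ_m > 0, and let κ = σ₁/σ_m be the condition number of B. Set X₀ = B/σ₁, and let (X_i)_{i≥0} be a sequence of m×m matrices satisfying the quadratic-convergence property of the Newton–Schulz iteration toward the orthogonal polar factor of B (which equals I), namely ‖X_i − I‖₂ ≤ ‖X₀ − I‖₂^{2^i} for all i ≥ 0. Then the orthogonalization error E_i = X_i − I after i iterations satisfies ‖E_i‖_F ≤ √m · (1 − 1/κ)^{2^i}. -/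
open Matrix Finset

lemma NS_frobInner_self_eq {p q : ℕ} (E : Matrix (Fin p) (Fin q) ℝ) :
    frobInner E E = ∑ j, ∑ i, E i j ^ 2 := by
  simp [frobInner, Matrix.trace, Matrix.mul_apply, Matrix.diag, sq]

lemma NS_specNorm_bddAbove {p q : ℕ} (E : Matrix (Fin p) (Fin q) ℝ) :
    BddAbove {r : ℝ | ∃ x : Fin q → ℝ, ∑ j, x j ^ 2 = 1 ∧
      r = Real.sqrt (∑ i, (E.mulVec x) i ^ 2)} := by
  refine ⟨Real.sqrt (∑ i, ∑ j, E i j ^ 2), ?_⟩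
  rintro r ⟨x, hx, rfl⟩
  refine Real.sqrt_le_sqrt (Finset.sum_le_sum fun i _ => ?_)
  calc (E.mulVec x) i ^ 2 = (∑ j, E i j * x j) ^ 2 := rfl
    _ ≤ (∑ j, E i j ^ 2) * (∑ j, x j ^ 2) :=
        Finset.sum_mul_sq_le_sq_mul_sq Finset.univ (fun j => E i j) x
    _ = ∑ j, E i j ^ 2 := by rw [hx, mul_one]

lemma NS_col_le_specNorm {p q : ℕ} (E : Matrix (Fin p) (Fin q) ℝ) (j : Fin q) :
    Real.sqrt (∑ i, E i j ^ 2) ≤ specNorm E := by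
  apply le_csSup (NS_specNorm_bddAbove E)
  refine ⟨Pi.single j 1, by simp [Pi.single_apply, sq, Finset.sum_ite_eq'], ?_⟩
  congr 1
  refine Finset.sum_congr rfl fun i _ => ?_
  rw [Matrix.mulVec_single]
  simp

lemma NS_specNorm_nonneg {p q : ℕ} (hq : 0 < q) (E : Matrix (Fin p) (Fin q) ℝ) :
    0 ≤ specNorm E :=
  le_trans (Real.sqrt_nonneg _) (NS_col_le_specNorm E ⟨0, hq⟩)

lemma NS_frob_le_spec {p : ℕ} (hp : 0 < p) (E : Matrix (Fin p) (Fin p) ℝ) :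
    frobNorm E ≤ Real.sqrt p * specNorm E := by
  have hs0 : 0 ≤ specNorm E := NS_specNorm_nonneg hp E
  have hcol2 : ∀ j, ∑ i, E i j ^ 2 ≤ specNorm E ^ 2 := fun j => by
    have hnn : 0 ≤ ∑ i, E i j ^ 2 := Finset.sum_nonneg fun _ _ => sq_nonneg _
    calc ∑ i, E i j ^ 2 = Real.sqrt (∑ i, E i j ^ 2) ^ 2 := (Real.sq_sqrt hnn).symm
      _ ≤ specNorm E ^ 2 := pow_le_pow_left₀ (Real.sqrt_nonneg _) (NS_col_le_specNorm E j) 2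
  calc frobNorm E = Real.sqrt (∑ j, ∑ i, E i j ^ 2) := by rw [frobNorm, NS_frobInner_self_eq]
    _ ≤ Real.sqrt (∑ _j : Fin p, specNorm E ^ 2) :=
        Real.sqrt_le_sqrt (Finset.sum_le_sum fun j _ => hcol2 j)
    _ = Real.sqrt p * specNorm E := by
        rw [Finset.sum_const, Finset.card_univ, Fintype.card_fin, nsmul_eq_mul,
          Real.sqrt_mul (by positivity), Real.sqrt_sq hs0]

lemma NS_sum_sq_coords {m : ℕ} (u : Fin m → Fin m → ℝ)
    (hu : ∀ i j, ∑ k, u i k * u j k = if i = j then 1 else 0) (d : Fin m → ℝ) :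
    ∑ k, (∑ i, d i * u i k) ^ 2 = ∑ i, d i ^ 2 := by
  have h : ∑ k, (∑ i, d i * u i k) ^ 2
      = ∑ i, ∑ j, (d i * d j) * ∑ k, u i k * u j k := by
    simp_rw [sq, Finset.sum_mul_sum, Finset.mul_sum]
    rw [Finset.sum_comm]
    refine Finset.sum_congr rfl fun i _ => ?_
    rw [Finset.sum_comm]
    refine Finset.sum_congr rfl fun j _ => Finset.sum_congr rfl fun k _ => by ring
  rw [h]
  simp [hu, mul_ite, Finset.sum_ite_eq, sq]

lemma NS_eigen_extract {m : ℕ} (B : Matrix (Fin m) (Fin m) ℝ) (hB : B.IsHermitian) :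
    ∃ (u : Fin m → Fin m → ℝ) (lam : Fin m → ℝ),
      (∀ i j, ∑ k, u i k * u j k = if i = j then 1 else 0) ∧
      (∀ i, B *ᵥ u i = lam i • u i) ∧
      (∀ x : Fin m → ℝ, ∀ k, x k = ∑ i, (∑ l, u i l * x l) * u i k) := by
  refine ⟨fun i => ⇑(hB.eigenvectorBasis i), hB.eigenvalues, ?_, ?_, ?_⟩
  · intro i j
    have h := (orthonormal_iff_ite (𝕜 := ℝ)).mp hB.eigenvectorBasis.orthonormal i j
    rw [← h]
    simp [PiLp.inner_apply, RCLike.inner_apply, conj_trivial]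
    exact Finset.sum_congr rfl fun _ _ => mul_comm _ _
  · exact fun i => hB.mulVec_eigenvectorBasis i
  · intro x k
    have h := hB.eigenvectorBasis.sum_repr' (WithLp.toLp 2 x)
    have h2 := congrFun (congrArg (fun (v : EuclideanSpace ℝ (Fin m)) => (v : Fin m → ℝ)) h) k
    simp only [PiLp.inner_apply, RCLike.inner_apply, conj_trivial, WithLp.ofLp_toLp] at h2
    rw [← h2]
    rw [WithLp.ofLp_sum, Finset.sum_apply]
    exact Finset.sum_congr rfl fun i _ => by simp [mul_comm]

lemma NS_specB {m : ℕ} (B : Matrix (Fin m) (Fin m) ℝ) (hB : B.IsHermitian)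
    (σ₁ σₘ : ℝ) (hσ₁_pos : 0 < σ₁) (hσₘ_pos : 0 < σₘ)
    (hmax : ∀ (lam : ℝ) (v : Fin m → ℝ), v ≠ 0 → B *ᵥ v = lam • v → lam ≤ σ₁)
    (hmin : ∀ (lam : ℝ) (v : Fin m → ℝ), v ≠ 0 → B *ᵥ v = lam • v → σₘ ≤ lam)
    (hσₘσ₁ : σₘ ≤ σ₁) :
    specNorm (σ₁⁻¹ • B - 1) ≤ 1 - σₘ / σ₁ := by
  obtain ⟨u, lam, hu, heig, hcomp⟩ := NS_eigen_extract B hB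
  have hune : ∀ i, u i ≠ 0 := by
    intro i h
    have := hu i i
    rw [h] at this
    simp at this
  have hlam : ∀ i, σₘ ≤ lam i ∧ lam i ≤ σ₁ := fun i =>
    ⟨hmin _ _ (hune i) (heig i), hmax _ _ (hune i) (heig i)⟩
  have hc0 : 0 ≤ 1 - σₘ / σ₁ := by
    have : σₘ / σ₁ ≤ 1 := (div_le_one hσ₁_pos).mpr hσₘσ₁
    linarith
  refine Real.sSup_le ?_ hc0
  rintro r ⟨x, hx, rfl⟩
  set d : Fin m → ℝ := fun i => ∑ l, u i l * x l with hd
  have hxd : ∀ k, x k = ∑ i, d i * u i k := hcomp x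
  set μ : Fin m → ℝ := fun i => σ₁⁻¹ * lam i - 1 with hμ
  have hMx : ∀ k, ((σ₁⁻¹ • B - 1) *ᵥ x) k = ∑ i, (d i * μ i) * u i k := by
    intro k
    have hxsum : x = ∑ i, d i • u i := by
      funext k
      rw [hxd k, Finset.sum_apply]
      simp [smul_eq_mul]
    have hBx : B *ᵥ x = ∑ i, d i • (lam i • u i) := by
      conv_lhs => rw [hxsum]
      have hms := map_sum B.mulVecLin (fun i => d i • u i) Finset.univ
      simp only [Matrix.mulVecLin_apply] at hms
      rw [hms]
      refine Finset.sum_congr rfl fun i _ => ?_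
      rw [Matrix.mulVec_smul, heig i]
    rw [Matrix.sub_mulVec, Matrix.smul_mulVec, Matrix.one_mulVec, hBx]
    rw [Pi.sub_apply, Pi.smul_apply, Finset.sum_apply]
    conv_lhs => rw [hxd k]
    rw [Finset.smul_sum, ← Finset.sum_sub_distrib]
    refine Finset.sum_congr rfl fun i _ => ?_
    simp only [Pi.smul_apply, smul_eq_mul, hμ]
    ring
  have hsum : ∑ k, ((σ₁⁻¹ • B - 1) *ᵥ x) k ^ 2 = ∑ i, (d i * μ i) ^ 2 := by
    have := NS_sum_sq_coords u hu (fun i => d i * μ i)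
    rw [← this]
    exact Finset.sum_congr rfl fun k _ => by rw [hMx k]
  have hd1 : ∑ i, d i ^ 2 = 1 := by
    have := NS_sum_sq_coords u hu d
    rw [← this, ← hx]
    exact Finset.sum_congr rfl fun k _ => by rw [← hxd k]
  have hμb : ∀ i, μ i ^ 2 ≤ (1 - σₘ / σ₁) ^ 2 := by
    intro i
    have h1 := (hlam i).1
    have h2 := (hlam i).2
    have hinv : 0 < σ₁⁻¹ := inv_pos.mpr hσ₁_pos
    refine sq_le_sq' ?_ ?_
    · simp only [hμ]
      have : σₘ / σ₁ ≤ σ₁⁻¹ * lam i := by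
        rw [div_eq_inv_mul]
        exact mul_le_mul_of_nonneg_left h1 (le_of_lt hinv)
      linarith
    · simp only [hμ]
      have h3 : σ₁⁻¹ * lam i ≤ 1 := by
        rw [← inv_mul_cancel₀ (ne_of_gt hσ₁_pos)]
        exact mul_le_mul_of_nonneg_left h2 (le_of_lt hinv)
      linarith
  have hfinal : ∑ i, (d i * μ i) ^ 2 ≤ (1 - σₘ / σ₁) ^ 2 := by
    calc ∑ i, (d i * μ i) ^ 2 = ∑ i, d i ^ 2 * μ i ^ 2 := by
          refine Finset.sum_congr rfl fun i _ => by ring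
      _ ≤ ∑ i, d i ^ 2 * (1 - σₘ / σ₁) ^ 2 :=
          Finset.sum_le_sum fun i _ => mul_le_mul_of_nonneg_left (hμb i) (sq_nonneg _)
      _ = (1 - σₘ / σ₁) ^ 2 := by rw [← Finset.sum_mul, hd1, one_mul]
  calc Real.sqrt (∑ i, ((σ₁⁻¹ • B - 1) *ᵥ x) i ^ 2)
      ≤ Real.sqrt ((1 - σₘ / σ₁) ^ 2) := Real.sqrt_le_sqrt (by rw [hsum]; exact hfinal)
    _ = 1 - σₘ / σ₁ := Real.sqrt_sq hc0

/-- **Newton–Schulz orthogonalization error bound.**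
For `A ∈ ℝ^{m×n}` (`m ≤ n`), `B = AAᵀ` with largest eigenvalue `σ₁ > 0`, smallest
eigenvalue `σₘ > 0` and condition number `κ = σ₁/σₘ`, if `X₀ = B/σ₁` and the iterates
satisfy the quadratic-convergence property `‖Xᵢ − I‖₂ ≤ ‖X₀ − I‖₂^{2^i}` toward the
orthogonal polar factor `I` of `B`, then the error `Eᵢ = Xᵢ − I` satisfies
`‖Eᵢ‖_F ≤ √m (1 − 1/κ)^{2^i}`. -/
theorem newton_schulz_error_bound
    {m n : ℕ} (hmn : m ≤ n) (A : Matrix (Fin m) (Fin n) ℝ)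
    (σ₁ σₘ κ : ℝ)
    (hσ₁_eig : ∃ v : Fin m → ℝ, v ≠ 0 ∧ (A * Aᵀ).mulVec v = σ₁ • v)
    (hσ₁_max : ∀ (lam : ℝ) (v : Fin m → ℝ), v ≠ 0 → (A * Aᵀ).mulVec v = lam • v → lam ≤ σ₁)
    (hσₘ_eig : ∃ v : Fin m → ℝ, v ≠ 0 ∧ (A * Aᵀ).mulVec v = σₘ • v)
    (hσₘ_min : ∀ (lam : ℝ) (v : Fin m → ℝ), v ≠ 0 → (A * Aᵀ).mulVec v = lam • v → σₘ ≤ lam)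
    (hσ₁_pos : 0 < σ₁) (hσₘ_pos : 0 < σₘ) (hκ : κ = σ₁ / σₘ)
    (X : ℕ → Matrix (Fin m) (Fin m) ℝ)
    (hX0 : X 0 = σ₁⁻¹ • (A * Aᵀ))
    (hquad : ∀ i : ℕ, specNorm (X i - 1) ≤ specNorm (X 0 - 1) ^ (2 ^ i)) :
    ∀ i : ℕ, frobNorm (X i - 1) ≤ Real.sqrt m * (1 - 1 / κ) ^ (2 ^ i) := by
  obtain ⟨v, hv, hve⟩ := hσ₁_eig
  obtain ⟨i0, _⟩ := Function.ne_iff.mp hv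
  have hm : 0 < m := i0.pos
  obtain ⟨w, hw, hwe⟩ := hσₘ_eig
  have hσₘσ₁ : σₘ ≤ σ₁ := hσ₁_max σₘ w hw hwe
  have hB : (A * Aᵀ).IsHermitian := by
    have := Matrix.isHermitian_mul_conjTranspose_self A
    rwa [Matrix.conjTranspose_eq_transpose_of_trivial] at this
  have hspec0 : specNorm (X 0 - 1) ≤ 1 - σₘ / σ₁ := by
    rw [hX0]
    exact NS_specB (A * Aᵀ) hB σ₁ σₘ hσ₁_pos hσₘ_pos hσ₁_max hσₘ_min hσₘσ₁
  have hs0 : 0 ≤ specNorm (X 0 - 1) := NS_specNorm_nonneg hm _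
  have hκeq : 1 - 1 / κ = 1 - σₘ / σ₁ := by rw [hκ, one_div_div]
  intro i
  calc frobNorm (X i - 1) ≤ Real.sqrt m * specNorm (X i - 1) := NS_frob_le_spec hm _
    _ ≤ Real.sqrt m * specNorm (X 0 - 1) ^ (2 ^ i) :=
        mul_le_mul_of_nonneg_left (hquad i) (Real.sqrt_nonneg _)
    _ ≤ Real.sqrt m * (1 - σₘ / σ₁) ^ (2 ^ i) :=
        mul_le_mul_of_nonneg_left (pow_le_pow_left₀ hs0 hspec0 _) (Real.sqrt_nonneg _)
    _ = Real.sqrt m * (1 - 1 / κ) ^ (2 ^ i) := by rw [hκeq]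
end
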